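/- Fix x, z ∈ ℂ with e^x ≠ 1 and e^{2πiz} ≠ 1. Then F(x,z,τ) tends to πi·(coth(x/2) + coth(πiz)) as Im τ → ∞, where coth(w) = (e^w + e^{−w})/(e^w − e^{−w}). -/

import Mathlib

open Complex Filter

/-- The Jacobi theta function `θ(z|τ) = ∑_{n∈ℤ} (−1)^n e^{iπτ(n+1/2)²} e^{z(n+1/2)}`. -/
noncomputable def jTheta (z : ℂ) (τ : UpperHalfPlane) : ℂ :=
  ∑' n : ℤ, (-1 : ℂ) ^ n * Complex.exp (Real.pi * I * (τ : ℂ) * ((n : ℂ) + 1/2) ^ 2)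
    * Complex.exp (z * ((n : ℂ) + 1/2))

namespace JTh

lemma summable_master (b : ℝ) {c : ℝ} (hc : 0 < c) :
    Summable fun n : ℤ => Real.exp (b * |(n:ℝ)| - c * (n:ℝ)^2) := by
  have h := summable_pow_mul_jacobiTheta₂_term_bound (b / (2*Real.pi)) (T := c/Real.pi)
    (by positivity) 0
  refine h.congr fun n => ?_
  rw [pow_zero, one_mul]
  congr 1
  have hπ := Real.pi_ne_zero
  push_cast
  field_simp
  ring

noncomputable def A (τ : UpperHalfPlane) (n : ℤ) : ℂ :=
  (-1 : ℂ) ^ n * Complex.exp (Real.pi * I * (τ : ℂ) * ((n:ℂ)^2 + n))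

lemma norm_A (τ : UpperHalfPlane) (n : ℤ) :
    ‖A τ n‖ = Real.exp (-(Real.pi * τ.im * ((n:ℝ)^2 + n))) := by
  have h1 : ((Real.pi : ℂ) * I * (τ : ℂ) * ((n:ℂ)^2 + n)).re
      = -(Real.pi * τ.im * ((n:ℝ)^2 + n)) := by
    have : ((Real.pi : ℂ) * I * (τ : ℂ) * ((n:ℂ)^2 + n))
        = ((Real.pi * ((n:ℝ)^2 + n) : ℝ) : ℂ) * ((τ:ℂ) * I) := by push_cast; ring
    rw [this, Complex.re_ofReal_mul]
    simp [Complex.mul_re, UpperHalfPlane.coe_im]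
    ring
  rw [A, norm_mul, norm_zpow, norm_neg, norm_one, one_zpow, one_mul,
    Complex.norm_exp, h1]

lemma nonneg_aux (n : ℤ) : (0:ℝ) ≤ (n:ℝ)^2 + n := by
  have : (0:ℤ) ≤ n^2 + n := by
    rcases le_or_gt 0 n with h | h
    · positivity
    · have : n ≤ -1 := by omega
      nlinarith
  exact_mod_cast this

noncomputable def T (z : ℂ) (τ : UpperHalfPlane) : ℂ :=
  ∑' n : ℤ, A τ n * Complex.exp (z * ((n:ℂ) + 1/2))

noncomputable def T' (τ : UpperHalfPlane) : ℂ :=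
  ∑' n : ℤ, A τ n * ((n:ℂ) + 1/2)

lemma jTheta_eq (z : ℂ) (τ : UpperHalfPlane) :
    jTheta z τ = Complex.exp (Real.pi * I * (τ:ℂ) / 4) * T z τ := by
  rw [T, ← tsum_mul_left]
  refine tsum_congr fun n => ?_
  rw [A, show ((Real.pi:ℂ) * I * (τ:ℂ) * ((n:ℂ) + 1/2) ^ 2)
      = (Real.pi:ℂ) * I * (τ:ℂ) / 4 + (Real.pi:ℂ) * I * (τ:ℂ) * ((n:ℂ)^2 + n) by ring,
    Complex.exp_add]
  ring

lemma tendsto_im : Tendsto UpperHalfPlane.im UpperHalfPlane.atImInfty atTop :=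
  tendsto_comap

lemma eventually_one_le_im : ∀ᶠ τ : UpperHalfPlane in UpperHalfPlane.atImInfty, 1 ≤ τ.im :=
  (UpperHalfPlane.atImInfty_mem {τ | 1 ≤ τ.im}).mpr ⟨1, fun _ h => h⟩

lemma tendsto_A_zero {n : ℤ} (h0 : n ≠ 0) (h1 : n ≠ -1) :
    Tendsto (fun τ : UpperHalfPlane => A τ n) UpperHalfPlane.atImInfty (nhds 0) := by
  have hm : (1:ℝ) ≤ (n:ℝ)^2 + n := by
    have : (1:ℤ) ≤ n^2 + n := by
      rcases le_or_gt 0 n with h | h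
      · have : 1 ≤ n := by omega
        nlinarith
      · have : n ≤ -2 := by omega
        nlinarith
    exact_mod_cast this
  rw [tendsto_zero_iff_norm_tendsto_zero]
  simp only [norm_A]
  have hc : Tendsto (fun τ : UpperHalfPlane => Real.pi * τ.im * ((n:ℝ)^2+n))
      UpperHalfPlane.atImInfty atTop := by
    refine Tendsto.atTop_mul_const (by linarith) ?_
    exact tendsto_im.const_mul_atTop Real.pi_pos
  exact Real.tendsto_exp_atBot.comp (tendsto_neg_atTop_atBot.comp hc)


lemma re_mul_real (w : ℂ) (r : ℝ) : (w * (r:ℂ)).re = w.re * r := by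
  rw [mul_comm, Complex.re_ofReal_mul, mul_comm]

lemma tendsto_T (z : ℂ) :
    Tendsto (fun τ : UpperHalfPlane => T z τ) UpperHalfPlane.atImInfty
      (nhds (Complex.exp (z/2) - Complex.exp (-(z/2)))) := by
  classical
  set g : ℤ → ℂ := fun n => if n = 0 then Complex.exp (z/2)
    else if n = -1 then -Complex.exp (-(z/2)) else 0 with hg
  have htsum : ∑' n : ℤ, g n = Complex.exp (z/2) - Complex.exp (-(z/2)) := by
    rw [tsum_eq_sum (s := {0, -1}) (by intro b hb; simp only [Finset.mem_insert,
      Finset.mem_singleton, not_or] at hb; simp [hg, hb.1, hb.2])]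
    rw [Finset.sum_insert (by decide), Finset.sum_singleton]
    simp [hg]
    ring
  rw [← htsum]
  have hb : Summable fun n : ℤ =>
      Real.exp |z.re| * Real.exp ((Real.pi + |z.re|) * |(n:ℝ)| - Real.pi * (n:ℝ)^2) :=
    (summable_master _ Real.pi_pos).mul_left _
  refine tendsto_tsum_of_dominated_convergence hb (fun k => ?_) ?_
  · -- pointwise limits
    rcases eq_or_ne k 0 with rfl | hk0
    · have : ∀ τ : UpperHalfPlane, A τ 0 * Complex.exp (z * (((0:ℤ):ℂ) + 1/2))
          = Complex.exp (z/2) := by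
        intro τ
        have hA : A τ 0 = 1 := by
          rw [A, show (((0:ℤ):ℂ)^2 + ((0:ℤ):ℂ)) = 0 by push_cast; ring]
          norm_num
        rw [hA, one_mul, show z * (((0:ℤ):ℂ) + 1/2) = z/2 by push_cast; ring]
      simp only [this, hg, if_pos rfl]
      exact tendsto_const_nhds
    rcases eq_or_ne k (-1) with rfl | hk1
    · have : ∀ τ : UpperHalfPlane, A τ (-1) * Complex.exp (z * (((-1:ℤ):ℂ) + 1/2))
          = -Complex.exp (-(z/2)) := by
        intro τ
        have hA : A τ (-1) = -1 := by
          rw [A, show (((-1:ℤ):ℂ)^2 + ((-1:ℤ):ℂ)) = 0 by push_cast; ring]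
          norm_num
        rw [hA, show z * (((-1:ℤ):ℂ) + 1/2) = -(z/2) by push_cast; ring]
        ring
      simp only [this, hg]
      norm_num
    · have := (tendsto_A_zero hk0 hk1).mul_const (Complex.exp (z * ((k:ℂ) + 1/2)))
      rw [zero_mul] at this
      simpa [hg, hk0, hk1] using this
  · -- uniform bound
    filter_upwards [eventually_one_le_im] with τ hτ
    intro k
    rw [norm_mul, norm_A, Complex.norm_exp,
      show z * ((k:ℂ) + 1/2) = z * ((((k:ℝ) + 1/2 : ℝ)):ℂ) by push_cast; ring,
      re_mul_real, ← Real.exp_add, ← Real.exp_add]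
    apply Real.exp_le_exp.mpr
    have h0 := nonneg_aux k
    have hk1 : (k:ℝ) ≤ |(k:ℝ)| := le_abs_self _
    have hk2 : -|(k:ℝ)| ≤ (k:ℝ) := neg_abs_le _
    have hsq : (k:ℝ)^2 = |(k:ℝ)|^2 := (_root_.sq_abs _).symm
    have hr1 : z.re ≤ |z.re| := le_abs_self _
    have hr2 : -|z.re| ≤ z.re := neg_abs_le _
    have hK : (0:ℝ) ≤ |(k:ℝ)| := abs_nonneg _
    have hπ := Real.pi_pos
    have e0 : Real.pi * ((k:ℝ)^2 + k) ≤ Real.pi * τ.im * ((k:ℝ)^2 + k) := by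
      calc Real.pi * ((k:ℝ)^2+k) = 1 * (Real.pi * ((k:ℝ)^2+k)) := by ring
        _ ≤ τ.im * (Real.pi * ((k:ℝ)^2+k)) :=
            mul_le_mul_of_nonneg_right hτ (mul_nonneg Real.pi_pos.le h0)
        _ = Real.pi * τ.im * ((k:ℝ)^2+k) := by ring
    have hsq' : Real.pi * (k:ℝ)^2 = Real.pi * |(k:ℝ)|^2 := by rw [hsq]
    have e1 : z.re * (k:ℝ) ≤ |z.re| * |(k:ℝ)| := by
      calc z.re * (k:ℝ) ≤ |z.re * (k:ℝ)| := le_abs_self _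
        _ = |z.re| * |(k:ℝ)| := abs_mul _ _
    have e2 : -(Real.pi * |(k:ℝ)|) ≤ Real.pi * (k:ℝ) := by
      have := mul_le_mul_of_nonneg_left hk2 Real.pi_pos.le
      linarith [this]
    nlinarith [e0, e1, e2, hsq', hr1]

lemma tendsto_T' :
    Tendsto (fun τ : UpperHalfPlane => T' τ) UpperHalfPlane.atImInfty (nhds 1) := by
  classical
  set g : ℤ → ℂ := fun n => if n = 0 then (1/2 : ℂ) else if n = -1 then (1/2 : ℂ) else 0 with hg
  have htsum : ∑' n : ℤ, g n = 1 := by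
    rw [tsum_eq_sum (s := {0, -1}) (by intro b hb; simp only [Finset.mem_insert,
      Finset.mem_singleton, not_or] at hb; simp [hg, hb.1, hb.2])]
    rw [Finset.sum_insert (by decide), Finset.sum_singleton]
    norm_num [hg]
  rw [← htsum]
  have hb : Summable fun n : ℤ =>
      Real.exp 1 * Real.exp ((Real.pi + 1) * |(n:ℝ)| - Real.pi * (n:ℝ)^2) :=
    (summable_master _ Real.pi_pos).mul_left _
  refine tendsto_tsum_of_dominated_convergence hb (fun k => ?_) ?_
  · rcases eq_or_ne k 0 with rfl | hk0
    · have : ∀ τ : UpperHalfPlane, A τ 0 * (((0:ℤ):ℂ) + 1/2) = 1/2 := by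
        intro τ; simp [A]
      simp only [this, hg, if_pos rfl]
      exact tendsto_const_nhds
    rcases eq_or_ne k (-1) with rfl | hk1
    · have : ∀ τ : UpperHalfPlane, A τ (-1) * (((-1:ℤ):ℂ) + 1/2) = 1/2 := by
        intro τ
        simp [A]
        norm_num
      simp only [this, hg]
      norm_num
    · have := (tendsto_A_zero hk0 hk1).mul_const ((k:ℂ) + 1/2)
      rw [zero_mul] at this
      simpa [hg, hk0, hk1] using this
  · filter_upwards [eventually_one_le_im] with τ hτ
    intro k
    rw [norm_mul, norm_A,
      show ((k:ℂ) + 1/2) = ((((k:ℝ) + 1/2 : ℝ)):ℂ) by push_cast; ring,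
      Complex.norm_real, Real.norm_eq_abs]
    have h0 := nonneg_aux k
    have hk1 : (k:ℝ) ≤ |(k:ℝ)| := le_abs_self _
    have hsq : (k:ℝ)^2 = |(k:ℝ)|^2 := (_root_.sq_abs _).symm
    have hK : (0:ℝ) ≤ |(k:ℝ)| := abs_nonneg _
    have hπ := Real.pi_pos
    have hk2 : -|(k:ℝ)| ≤ (k:ℝ) := neg_abs_le _
    have e0 : Real.exp (-(Real.pi * τ.im * ((k:ℝ)^2 + k)))
        ≤ Real.exp (Real.pi * |(k:ℝ)| - Real.pi * (k:ℝ)^2) := by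
      apply Real.exp_le_exp.mpr
      have ee : Real.pi * ((k:ℝ)^2 + k) ≤ Real.pi * τ.im * ((k:ℝ)^2 + k) := by
        calc Real.pi * ((k:ℝ)^2+k) = 1 * (Real.pi * ((k:ℝ)^2+k)) := by ring
          _ ≤ τ.im * (Real.pi * ((k:ℝ)^2+k)) :=
              mul_le_mul_of_nonneg_right hτ (mul_nonneg Real.pi_pos.le h0)
          _ = Real.pi * τ.im * ((k:ℝ)^2+k) := by ring
      have e2 : -(Real.pi * |(k:ℝ)|) ≤ Real.pi * (k:ℝ) := by
        have := mul_le_mul_of_nonneg_left hk2 Real.pi_pos.le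
        linarith [this]
      nlinarith [ee, e2]
    have e1 : |(k:ℝ) + 1/2| ≤ Real.exp (|(k:ℝ)| + 1) := by
      calc |(k:ℝ) + 1/2| ≤ |(k:ℝ)| + 1 := by
            have h12 : |(1/2:ℝ)| ≤ 1 := abs_le.mpr (by constructor <;> norm_num)
            calc |(k:ℝ) + 1/2| ≤ |(k:ℝ)| + |(1/2:ℝ)| := abs_add_le _ _
              _ ≤ |(k:ℝ)| + 1 := by linarith
        _ ≤ Real.exp (|(k:ℝ)| + 1) := by
            have := Real.add_one_le_exp (|(k:ℝ)| + 1)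
            linarith
    calc Real.exp (-(Real.pi * τ.im * ((k:ℝ)^2 + k))) * |(k:ℝ) + 1/2|
        ≤ Real.exp (Real.pi * |(k:ℝ)| - Real.pi * (k:ℝ)^2) * Real.exp (|(k:ℝ)| + 1) := by
          apply mul_le_mul e0 e1 (abs_nonneg _) (Real.exp_nonneg _)
      _ = Real.exp 1 * Real.exp ((Real.pi + 1) * |(k:ℝ)| - Real.pi * (k:ℝ)^2) := by
          rw [← Real.exp_add, ← Real.exp_add]
          congr 1
          ring


lemma summable_A (τ : UpperHalfPlane) : Summable fun n : ℤ => A τ n := by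
  have hπt : (0:ℝ) < Real.pi * τ.im := mul_pos Real.pi_pos τ.im_pos
  refine (summable_master (Real.pi * τ.im) hπt).of_norm_bounded fun n => ?_
  rw [norm_A, Real.exp_le_exp]
  have h2 : (n:ℝ)^2 = |(n:ℝ)|^2 := (_root_.sq_abs _).symm
  have h3 : (0:ℝ) ≤ (n:ℝ) + |(n:ℝ)| := by linarith [neg_abs_le (n:ℝ)]
  nlinarith [mul_nonneg hπt.le h3]

lemma hasDerivAt_T (τ : UpperHalfPlane) :
    HasDerivAt (fun w => T w τ) (T' τ) 0 := by
  have hπt : (0:ℝ) < Real.pi * τ.im := mul_pos Real.pi_pos τ.im_pos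
  -- the summable bound on derivatives over the unit ball
  set u : ℤ → ℝ := fun n =>
    Real.exp (-(Real.pi * τ.im * ((n:ℝ)^2 + n))) * (Real.exp (|(n:ℝ)| + 1) * (|(n:ℝ)| + 1))
    with hu_def
  have hu : Summable u := by
    refine ((summable_master (Real.pi * τ.im + 2) hπt).mul_left
      (Real.exp 2)).of_nonneg_of_le (fun n => by positivity) (fun n => ?_)
    have h2 : (n:ℝ)^2 = |(n:ℝ)|^2 := (_root_.sq_abs _).symm
    have h3 : (0:ℝ) ≤ (n:ℝ) + |(n:ℝ)| := by linarith [neg_abs_le (n:ℝ)]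
    have hA : Real.exp (-(Real.pi * τ.im * ((n:ℝ)^2 + n)))
        ≤ Real.exp (Real.pi * τ.im * |(n:ℝ)| - Real.pi * τ.im * (n:ℝ)^2) :=
      Real.exp_le_exp.mpr (by nlinarith [mul_nonneg hπt.le h3])
    have hB : Real.exp (|(n:ℝ)| + 1) * (|(n:ℝ)| + 1)
        ≤ Real.exp (|(n:ℝ)| + 1) * Real.exp (|(n:ℝ)| + 1) := by
      have := Real.add_one_le_exp (|(n:ℝ)| + 1)
      have hKn : (0:ℝ) ≤ |(n:ℝ)| := abs_nonneg _
      exact mul_le_mul_of_nonneg_left (by linarith) (Real.exp_nonneg _)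
    calc u n ≤ Real.exp (Real.pi * τ.im * |(n:ℝ)| - Real.pi * τ.im * (n:ℝ)^2)
          * (Real.exp (|(n:ℝ)| + 1) * Real.exp (|(n:ℝ)| + 1)) := by
          exact mul_le_mul hA hB (by positivity) (Real.exp_nonneg _)
      _ = Real.exp 2 * Real.exp ((Real.pi * τ.im + 2) * |(n:ℝ)| - Real.pi * τ.im * (n:ℝ)^2) := by
          rw [← Real.exp_add, ← Real.exp_add, ← Real.exp_add]
          congr 1
          ring
  have key : HasDerivAt (fun w : ℂ => ∑' n : ℤ, A τ n * Complex.exp (w * ((n:ℂ) + 1/2)))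
      (∑' n : ℤ, A τ n * (Complex.exp ((0:ℂ) * ((n:ℂ) + 1/2)) * ((n:ℂ) + 1/2))) 0 := by
    refine hasDerivAt_tsum_of_isPreconnected (𝕜 := ℂ) (F := ℂ)
      (g := fun (n : ℤ) (w : ℂ) => A τ n * Complex.exp (w * ((n:ℂ) + 1/2)))
      (g' := fun (n : ℤ) (w : ℂ) => A τ n * (Complex.exp (w * ((n:ℂ) + 1/2)) * ((n:ℂ) + 1/2)))
      (t := Metric.ball (0:ℂ) 1) (y₀ := 0) (y := 0)
      hu Metric.isOpen_ball
      (convex_ball (0:ℂ) 1).isPreconnected (fun n y _ => ?_) (fun n y hy => ?_)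
      (Metric.mem_ball_self one_pos) ?_ (Metric.mem_ball_self one_pos)
    · have := (((hasDerivAt_id y).mul_const ((n:ℂ) + 1/2)).cexp).const_mul (A τ n)
      simpa using this
    · have hy1 : ‖y‖ ≤ 1 := le_of_lt (mem_ball_zero_iff.mp hy)
      have hc : ‖((n:ℂ) + 1/2)‖ ≤ |(n:ℝ)| + 1 := by
        rw [show ((n:ℂ) + 1/2) = (((n:ℝ) + 1/2 : ℝ):ℂ) by push_cast; ring, Complex.norm_real,
          Real.norm_eq_abs]
        have h12 : |(1/2:ℝ)| ≤ 1 := abs_le.mpr (by constructor <;> norm_num)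
        calc |(n:ℝ) + 1/2| ≤ |(n:ℝ)| + |(1/2:ℝ)| := abs_add_le _ _
          _ ≤ |(n:ℝ)| + 1 := by linarith
      have hexp : ‖Complex.exp (y * ((n:ℂ) + 1/2))‖ ≤ Real.exp (|(n:ℝ)| + 1) := by
        rw [Complex.norm_exp, Real.exp_le_exp]
        calc (y * ((n:ℂ) + 1/2)).re ≤ ‖y * ((n:ℂ) + 1/2)‖ := Complex.re_le_norm _
          _ = ‖y‖ * ‖((n:ℂ) + 1/2)‖ := norm_mul _ _
          _ ≤ 1 * (|(n:ℝ)| + 1) :=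
              mul_le_mul hy1 hc (norm_nonneg _) zero_le_one
          _ = |(n:ℝ)| + 1 := one_mul _
      rw [norm_mul, norm_A, norm_mul]
      exact mul_le_mul_of_nonneg_left
        (mul_le_mul hexp hc (norm_nonneg _) (Real.exp_nonneg _)) (Real.exp_nonneg _)
    · refine (summable_A τ).congr fun n => ?_
      simp
  have h2 : (∑' n : ℤ, A τ n * (Complex.exp ((0:ℂ) * ((n:ℂ) + 1/2)) * ((n:ℂ) + 1/2))) = T' τ := by
    rw [T']
    refine tsum_congr fun n => ?_
    simp
  exact h2 ▸ key

lemma deriv_jTheta (τ : UpperHalfPlane) :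
    deriv (fun w => jTheta w τ) 0 = Complex.exp (Real.pi * I * (τ:ℂ) / 4) * T' τ := by
  have hfun : (fun w => jTheta w τ)
      = fun w => Complex.exp (Real.pi * I * (τ:ℂ) / 4) * T w τ := funext fun w => jTheta_eq w τ
  rw [hfun]
  exact (((hasDerivAt_T τ)).const_mul _).deriv

end JTh

/-- The Jacobi form `F(x,z,τ) = 2πi θ'(0|τ) θ(x+2πiz|τ)/(θ(x|τ) θ(2πiz|τ))`. -/
noncomputable def jacobiF (x z : ℂ) (τ : UpperHalfPlane) : ℂ :=
  2 * Real.pi * I * deriv (fun w => jTheta w τ) 0 * jTheta (x + 2 * Real.pi * I * z) τ /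
    (jTheta x τ * jTheta (2 * Real.pi * I * z) τ)

/-- The hyperbolic cotangent `coth w = (e^w + e^{−w})/(e^w − e^{−w})`. -/
noncomputable def cCoth (w : ℂ) : ℂ :=
  (Complex.exp w + Complex.exp (-w)) / (Complex.exp w - Complex.exp (-w))

open JTh

/-- For fixed `x, z` with `e^x ≠ 1` and `e^{2πiz} ≠ 1`,
`F(x,z,τ) → πi (coth(x/2) + coth(πiz))` as `Im τ → ∞`. -/
theorem jacobiF_tendsto_atImInfty (x z : ℂ)
    (hx : Complex.exp x ≠ 1) (hz : Complex.exp (2 * Real.pi * I * z) ≠ 1) :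
    Tendsto (fun τ : UpperHalfPlane => jacobiF x z τ) UpperHalfPlane.atImInfty
      (nhds (Real.pi * I * (cCoth (x / 2) + cCoth (Real.pi * I * z)))) := by
  have hx' : Complex.exp (x/2) - Complex.exp (-(x/2)) ≠ 0 := by
    rw [sub_ne_zero]
    intro h
    apply hx
    rw [show x = x/2 - -(x/2) by ring, Complex.exp_sub, h, div_self (Complex.exp_ne_zero _)]
  have hz' : Complex.exp ((2*(Real.pi:ℂ)*I*z)/2) - Complex.exp (-((2*(Real.pi:ℂ)*I*z)/2)) ≠ 0 := by
    rw [sub_ne_zero]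
    intro h
    apply hz
    rw [show 2*(Real.pi:ℂ)*I*z = (2*(Real.pi:ℂ)*I*z)/2 - -((2*(Real.pi:ℂ)*I*z)/2) by ring,
      Complex.exp_sub, h, div_self (Complex.exp_ne_zero _)]
  have hF : ∀ τ : UpperHalfPlane, jacobiF x z τ
      = 2*(Real.pi:ℂ)*I * T' τ * T (x + 2*Real.pi*I*z) τ / (T x τ * T (2*Real.pi*I*z) τ) := by
    intro τ
    rw [jacobiF, deriv_jTheta, jTheta_eq, jTheta_eq, jTheta_eq]
    set E := Complex.exp ((Real.pi:ℂ) * I * (τ:ℂ) / 4) with hE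
    rw [show 2*(Real.pi:ℂ)*I*(E * T' τ)*(E * T (x + 2*Real.pi*I*z) τ)
        = (E*E) * (2*(Real.pi:ℂ)*I * T' τ * T (x + 2*Real.pi*I*z) τ) by ring,
      show E * T x τ * (E * T (2*Real.pi*I*z) τ) = (E*E) * (T x τ * T (2*Real.pi*I*z) τ) by ring,
      mul_div_mul_left _ _ (by rw [hE]; exact mul_ne_zero (Complex.exp_ne_zero _) (Complex.exp_ne_zero _))]
  have kc : Tendsto (fun _ : UpperHalfPlane => 2*(Real.pi:ℂ)*I) UpperHalfPlane.atImInfty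
      (nhds (2*(Real.pi:ℂ)*I)) := tendsto_const_nhds
  have key := ((kc.mul tendsto_T').mul (tendsto_T (x + 2*Real.pi*I*z))).div
    ((tendsto_T x).mul (tendsto_T (2*Real.pi*I*z))) (mul_ne_zero hx' hz')
  have hz'' : Complex.exp ((Real.pi:ℂ)*I*z) - Complex.exp (-((Real.pi:ℂ)*I*z)) ≠ 0 := by
    rw [show ((Real.pi:ℂ)*I*z) = (2*(Real.pi:ℂ)*I*z)/2 by ring]
    exact hz'
  have halg : 2*(Real.pi:ℂ)*I * 1 *
      (Complex.exp ((x + 2*(Real.pi:ℂ)*I*z)/2) - Complex.exp (-((x + 2*(Real.pi:ℂ)*I*z)/2))) /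
      ((Complex.exp (x/2) - Complex.exp (-(x/2))) *
        (Complex.exp ((2*(Real.pi:ℂ)*I*z)/2) - Complex.exp (-((2*(Real.pi:ℂ)*I*z)/2))))
      = Real.pi * I * (cCoth (x / 2) + cCoth (Real.pi * I * z)) := by
    rw [cCoth, cCoth,
      show Complex.exp (-((x + 2*(Real.pi:ℂ)*I*z)/2))
        = Complex.exp (-(x/2)) * Complex.exp (-((Real.pi:ℂ)*I*z)) by
          rw [← Complex.exp_add]; congr 1; ring,
      show Complex.exp ((x + 2*(Real.pi:ℂ)*I*z)/2)
        = Complex.exp (x/2) * Complex.exp ((Real.pi:ℂ)*I*z) by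
          rw [← Complex.exp_add]; congr 1; ring,
      show Complex.exp (-((2*(Real.pi:ℂ)*I*z)/2)) = Complex.exp (-((Real.pi:ℂ)*I*z)) by
          congr 1; ring,
      show Complex.exp ((2*(Real.pi:ℂ)*I*z)/2) = Complex.exp ((Real.pi:ℂ)*I*z) by
          congr 1; ring]
    set ea := Complex.exp (x/2) with hea
    set ean := Complex.exp (-(x/2)) with hean
    set eb := Complex.exp ((Real.pi:ℂ)*I*z) with heb
    set ebn := Complex.exp (-((Real.pi:ℂ)*I*z)) with hebn
    field_simp
    ring
  exact halg ▸ ((tendsto_congr hF).mpr key)
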